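/- Let x, y be elements of a field with xy = 1 and x^k ≠ y^k. Then for all n ≥ 0, (y^{kn} - x^{kn})/(y^k - x^k) = F_n(L_k(x + y)), where F_n is the Fibonacci polynomial and L_k the Lucas polynomial. -/
import Mathlib


/-- In a field `K`, if `x * y = 1` and `x^k ≠ y^k` for a fixed positive integer `k`,
then for all `n ≥ 0`, `(y^(k*n) - x^(k*n)) / (y^k - x^k) = F n (L k (x + y))`. -/
theorem fib_lucas_power_identity (K : Type*) [Field K] (x y : K) (k : ℕ) (hk : 0 < k)
    (h1 : x * y = 1) (hxy : x ^ k ≠ y ^ k)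
    (F : ℕ → K → K)
    (hF0 : ∀ t : K, F 0 t = 0) (hF1 : ∀ t : K, F 1 t = 1)
    (hFrec : ∀ (n : ℕ) (t : K), F (n + 2) t = t * F (n + 1) t - F n t)
    (L : ℕ → K → K)
    (hL0 : ∀ t : K, L 0 t = 2) (hL1 : ∀ t : K, L 1 t = t)
    (hLrec : ∀ (n : ℕ) (t : K), L (n + 2) t = t * L (n + 1) t - L n t) :
    ∀ n : ℕ, (y ^ (k * n) - x ^ (k * n)) / (y ^ k - x ^ k) = F n (L k (x + y)) := by
  have hL : ∀ m : ℕ, L m (x + y) = x ^ m + y ^ m := by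
    intro m
    induction m using Nat.twoStepInduction with
    | zero => norm_num [hL0]
    | one => simp [hL1]
    | more m ih1 ih2 =>
      rw [hLrec, ih1, ih2]
      have : x * y = 1 := h1
      ring_nf
      linear_combination (x ^ m + y ^ m) * h1
  rw [hL]
  set a := x ^ k with ha
  set b := y ^ k with hb
  have hab : a * b = 1 := by rw [ha, hb, ← mul_pow, h1, one_pow]
  have hd : b - a ≠ 0 := sub_ne_zero.mpr fun h => hxy h.symm
  intro n
  rw [pow_mul, pow_mul, ← ha, ← hb]
  induction n using Nat.twoStepInduction with
  | zero => simp [hF0]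
  | one => simp [hF1, div_self hd]
  | more n ih1 ih2 =>
    rw [hFrec, ← ih1, ← ih2, ← mul_div_assoc, div_sub_div_same]
    congr 1
    linear_combination (a ^ n - b ^ n) * hab
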